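/- For each fixed k ∈ ℕ, the set of connected directed graphs of maximum degree at most k is generated by a bonding grammar, namely the grammar whose start tuple is the concatenation of the start tuples of the regular grammars BG_reg^{(0)}, …, BG_reg^{(k)} (i.e., all hypergraphs &(I^j, O^{i−j}) for 0 ≤ j ≤ i ≤ k), with N = {I, O}, T = {b}, and O ⊗ I = b. -/

import Mathlib

/-! ## Hypergraphs (over a label alphabet `Λ`), bonding, breaking bonds,
bonding grammars, following "Bonding Grammars" (Pshenitsyn). -/

structure LHypergraph (Λ : Type) where
  V : Finset ℕ
  E : Finset ℕ
  att : ℕ → List ℕ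
  lab : ℕ → Λ

namespace LHypergraph

variable {Λ : Type}

/-- Attachment vertices lie in `V` and attachment lengths agree with types. -/
def WellFormed (typ : Λ → ℕ) (H : LHypergraph Λ) : Prop :=
  (∀ e ∈ H.E, ∀ v ∈ H.att e, v ∈ H.V) ∧
  (∀ e ∈ H.E, (H.att e).length = typ (H.lab e))

def Adj (H : LHypergraph Λ) (u v : ℕ) : Prop :=
  ∃ e ∈ H.E, u ∈ H.att e ∧ v ∈ H.att e

/-- There is a path between `u` and `v` in `H`. -/
def HasPath (H : LHypergraph Λ) (u v : ℕ) : Prop :=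
  Relation.ReflTransGen H.Adj u v

def Connected (H : LHypergraph Λ) : Prop :=
  ∀ u ∈ H.V, ∀ v ∈ H.V, H.HasPath u v

/-- The degree of a vertex: the number of pairs `(e, i)` with
`att e ( i ) = v`, i.e. occurrences of `v` in attachment sequences. -/
def degree (H : LHypergraph Λ) (v : ℕ) : ℕ :=
  ∑ e ∈ H.E, (H.att e).count v

def degreeSet (H : LHypergraph Λ) : Set ℕ :=
  {d | ∃ v ∈ H.V, H.degree v = d}

def Isomorphic (H G : LHypergraph Λ) : Prop :=
  ∃ f g : ℕ → ℕ,
    Set.BijOn f ↑H.V ↑G.V ∧ Set.BijOn g ↑H.E ↑G.E ∧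
    ∀ e ∈ H.E, G.att (g e) = (H.att e).map f ∧ G.lab (g e) = H.lab e

end LHypergraph

/-- A single bonding step: two distinct hyperedges `e₁, e₂` whose labels can be
bonded are merged into a single new hyperedge `e'` with concatenated
attachment sequence and label `lab e₁ ⊗ lab e₂`. -/
def BondingStep {Λ : Type} (bond : Λ → Λ → Option Λ) (H H' : LHypergraph Λ) : Prop :=
  ∃ e₁ e₂ e' t,
    e₁ ∈ H.E ∧ e₂ ∈ H.E ∧ e₁ ≠ e₂ ∧ e' ∉ H.E ∧
    bond (H.lab e₁) (H.lab e₂) = some t ∧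
    H'.V = H.V ∧
    H'.E = (H.E \ {e₁, e₂}) ∪ {e'} ∧
    (∀ e ∈ H.E \ {e₁, e₂}, H'.att e = H.att e ∧ H'.lab e = H.lab e) ∧
    H'.att e' = H.att e₁ ++ H.att e₂ ∧
    H'.lab e' = t

/-- Breaking the bond `e'` (whose label is `A₁ ⊗ A₂`) of `H'`, introducing the
fresh hyperedges `e₁, e₂`, yields `H`. -/
def BreakBondAt {Λ : Type} (typ : Λ → ℕ) (bond : Λ → Λ → Option Λ)
    (H' H : LHypergraph Λ) (e' e₁ e₂ : ℕ) : Prop :=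
  ∃ A₁ A₂,
    e' ∈ H'.E ∧ e₁ ∉ H'.E ∧ e₂ ∉ H'.E ∧ e₁ ≠ e₂ ∧
    bond A₁ A₂ = some (H'.lab e') ∧
    H.V = H'.V ∧
    H.E = (H'.E \ {e'}) ∪ {e₁, e₂} ∧
    (∀ e ∈ H'.E \ {e'}, H.att e = H'.att e ∧ H.lab e = H'.lab e) ∧
    H.att e₁ = (H'.att e').take (typ A₁) ∧
    H.att e₂ = (H'.att e').drop (typ A₁) ∧
    H.lab e₁ = A₁ ∧ H.lab e₂ = A₂

def BreakBond {Λ : Type} (typ : Λ → ℕ) (bond : Λ → Λ → Option Λ)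
    (H' H : LHypergraph Λ) : Prop :=
  ∃ e' e₁ e₂, BreakBondAt typ bond H' H e' e₁ e₂

/-- `BreaksTo typ bond H l F`: starting from `H` and successively breaking the
bonds listed in `l` yields `F`. -/
def BreaksTo {Λ : Type} (typ : Λ → ℕ) (bond : Λ → Λ → Option Λ) :
    LHypergraph Λ → List ℕ → LHypergraph Λ → Prop
  | H, [], F => H = F
  | H, e :: l, F => ∃ H₁ e₁ e₂, BreakBondAt typ bond H H₁ e e₁ e₂ ∧ BreaksTo typ bond H₁ l F

/-- `H` is a disjoint union of copies of hypergraphs from `Zs`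
(this plays the role of `m · Z`). -/
def IsUnionOfCopies {Λ : Type} (Zs : Set (LHypergraph Λ)) (H : LHypergraph Λ) : Prop :=
  ∃ (n : ℕ) (cV cE : ℕ → ℕ),
    (∀ v ∈ H.V, cV v < n) ∧ (∀ e ∈ H.E, cE e < n) ∧
    (∀ e ∈ H.E, ∀ v ∈ H.att e, v ∈ H.V) ∧
    (∀ e ∈ H.E, ∀ v ∈ H.att e, cV v = cE e) ∧
    ∀ i < n, ∃ Z0 ∈ Zs, LHypergraph.Isomorphic
      ⟨H.V.filter (fun v => cV v = i), H.E.filter (fun e => cE e = i), H.att, H.lab⟩ Z0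

/-- `C` is a connected component of `H`. -/
def IsComponent {Λ : Type} (H C : LHypergraph Λ) : Prop :=
  C.V ⊆ H.V ∧ C.att = H.att ∧ C.lab = H.lab ∧ C.V.Nonempty ∧
  (∀ u ∈ C.V, ∀ v ∈ H.V, (H.HasPath u v ↔ v ∈ C.V)) ∧
  ∀ e, e ∈ C.E ↔ (e ∈ H.E ∧ ∃ v ∈ H.att e, v ∈ C.V)

/-- Disjoint union of two hypergraphs (via an even/odd renaming). -/
def hsum {Λ : Type} (H K : LHypergraph Λ) : LHypergraph Λ :=
  ⟨H.V.image (fun v => 2 * v) ∪ K.V.image (fun v => 2 * v + 1),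
   H.E.image (fun e => 2 * e) ∪ K.E.image (fun e => 2 * e + 1),
   fun e => if e % 2 = 0 then (H.att (e / 2)).map (fun v => 2 * v)
            else (K.att (e / 2)).map (fun v => 2 * v + 1),
   fun e => if e % 2 = 0 then H.lab (e / 2) else K.lab (e / 2)⟩

/-- A bonding grammar: typed labels, nonterminal and terminal alphabets, a
partial bond function, and a tuple `Z` of start hypergraphs. -/
structure BondingGrammar (Λ : Type) where
  typ : Λ → ℕ
  N : Set Λ
  T : Set Λ
  bond : Λ → Λ → Option Λ
  k : ℕ
  Z : Fin k → LHypergraph Λ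

namespace BondingGrammar

variable {Λ : Type}

/-- Side conditions from the definition of a bonding grammar: `N` and `T` are
disjoint, the start hypergraphs are connected and well-formed, and the bond
function is a partial injective function `N × N ⇀ T` adding the types. -/
def WellFormed (G : BondingGrammar Λ) : Prop :=
  Disjoint G.N G.T ∧
  (∀ i, (G.Z i).Connected ∧ (G.Z i).WellFormed G.typ) ∧
  (∀ A₁ A₂ t, G.bond A₁ A₂ = some t →
    A₁ ∈ G.N ∧ A₂ ∈ G.N ∧ t ∈ G.T ∧ G.typ t = G.typ A₁ + G.typ A₂) ∧
  (∀ A₁ A₂ B₁ B₂ t, G.bond A₁ A₂ = some t → G.bond B₁ B₂ = some t →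
    A₁ = B₁ ∧ A₂ = B₂)

def ZSet (G : BondingGrammar Λ) : Set (LHypergraph Λ) :=
  {Z0 | ∃ i, Z0 = G.Z i}

/-- `G` generates `H` if some `m · Z` derives `H` by bonding steps. -/
def Generates (G : BondingGrammar Λ) (H : LHypergraph Λ) : Prop :=
  ∃ H₀, IsUnionOfCopies G.ZSet H₀ ∧
    Relation.ReflTransGen (BondingStep G.bond) H₀ H

/-- The language of `G`: generated hypergraphs all of whose labels are terminal. -/
def Lang (G : BondingGrammar Λ) : Set (LHypergraph Λ) :=
  {H | G.Generates H ∧ ∀ e ∈ H.E, H.lab e ∈ G.T}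

end BondingGrammar

/-! Labels `I, O` (nonterminal, type 1) and `b` (terminal, type 2). -/

inductive Lab : Type
  | I | O | b
deriving DecidableEq

def typLab : Lab → ℕ
  | .I => 1 | .O => 1 | .b => 2

def bondLab : Lab → Lab → Option Lab
  | .O, .I => some .b
  | _, _ => none

/-- The hypergraph `&(I^j, O^(k-j))`: one vertex with `j` hyperedges labelled
`I` and `k - j` hyperedges labelled `O` attached to it. -/
def Zreg (k j : ℕ) : LHypergraph Lab :=
  ⟨{0}, Finset.range k, fun _ => [0], fun e => if e < j then Lab.I else Lab.O⟩

/-- The bonding grammar `BG_reg^(k)` with start tuple `Z_0^(k), …, Z_k^(k)`. -/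
def BGreg (k : ℕ) : BondingGrammar Lab :=
  { typ := typLab, N := {Lab.I, Lab.O}, T := {Lab.b}, bond := bondLab,
    k := k + 1, Z := fun j => Zreg k (j : ℕ) }

/-- The star graph with one center connected by a `b`-labelled edge to each of
`n` leaves. -/
def starGraph (n : ℕ) : LHypergraph Lab :=
  ⟨Finset.range (n + 1), Finset.range n, fun e => [0, e + 1], fun _ => Lab.b⟩

/-- The grammar whose start tuple consists of all `&(I^j, O^(i-j))` for
`0 ≤ j ≤ i ≤ k` (the concatenation of the start tuples of
`BG_reg^(0), …, BG_reg^(k)`, listed with harmless repetitions). -/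
def BGdeg (k : ℕ) : BondingGrammar Lab :=
  { typ := typLab, N := {Lab.I, Lab.O}, T := {Lab.b}, bond := bondLab,
    k := (k + 1) * (k + 1),
    Z := fun n => Zreg ((n : ℕ) % (k + 1)) (min ((n : ℕ) / (k + 1)) ((n : ℕ) % (k + 1))) }


lemma bond_cases {A B t : Lab} (h : bondLab A B = some t) :
    A = Lab.O ∧ B = Lab.I ∧ t = Lab.b := by
  cases A <;> cases B <;> simp_all [bondLab]

lemma count_map_injOn {f : ℕ → ℕ} {S : Set ℕ} (hf : Set.InjOn f S) {v : ℕ} (hv : v ∈ S)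
    (l : List ℕ) (hl : ∀ x ∈ l, x ∈ S) : (l.map f).count (f v) = l.count v := by
  induction l with
  | nil => simp
  | cons a t ih =>
    have ha : a ∈ S := hl a (by simp)
    have ht : ∀ x ∈ t, x ∈ S := fun x hx => hl x (by simp [hx])
    by_cases hav : a = v
    · subst hav; simp [List.count_cons, ih ht]
    · have : f a ≠ f v := fun hfa => hav (hf ha hv hfa)
      simp [List.count_cons, ih ht, hav, this]

lemma step_degree {K K' : LHypergraph Lab} (h : BondingStep bondLab K K') (v : ℕ) :
    K'.degree v = K.degree v := by
  obtain ⟨e₁, e₂, e', t, he₁, he₂, hne, hfresh, hbond, hV, hE, hkeep, hatt', hlab'⟩ := h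
  have hsub : ({e₁, e₂} : Finset ℕ) ⊆ K.E := by
    intro x hx; simp at hx; rcases hx with h | h <;> subst h <;> assumption
  have hdisj : Disjoint (K.E \ {e₁, e₂}) ({e'} : Finset ℕ) := by
    simp only [Finset.disjoint_singleton_right, Finset.mem_sdiff]
    intro ⟨h1, _⟩; exact hfresh h1
  unfold LHypergraph.degree
  rw [hE, Finset.sum_union hdisj, Finset.sum_singleton, hatt', List.count_append]
  rw [← Finset.sum_sdiff hsub]
  congr 1
  · exact Finset.sum_congr rfl (fun e he => by rw [(hkeep e he).1])
  · rw [Finset.sum_pair hne]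

lemma step_wf {K K' : LHypergraph Lab} (h : BondingStep bondLab K K')
    (hwf : K.WellFormed typLab) : K'.WellFormed typLab := by
  obtain ⟨e₁, e₂, e', t, he₁, he₂, hne, hfresh, hbond, hV, hE, hkeep, hatt', hlab'⟩ := h
  obtain ⟨hO, hI, hb⟩ := bond_cases hbond
  constructor
  · intro e he v hv
    rw [hE] at he; rw [hV]
    simp only [Finset.mem_union, Finset.mem_singleton] at he
    rcases he with he | he
    · rw [(hkeep e he).1] at hv
      exact hwf.1 e (Finset.mem_sdiff.mp he).1 v hv
    · subst he; rw [hatt'] at hv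
      rcases List.mem_append.mp hv with hv | hv
      · exact hwf.1 e₁ he₁ v hv
      · exact hwf.1 e₂ he₂ v hv
  · intro e he
    rw [hE] at he
    simp only [Finset.mem_union, Finset.mem_singleton] at he
    rcases he with he | he
    · rw [(hkeep e he).1, (hkeep e he).2]
      exact hwf.2 e (Finset.mem_sdiff.mp he).1
    · subst he
      rw [hatt', hlab', hb, List.length_append, hwf.2 e₁ he₁, hwf.2 e₂ he₂, hO, hI]
      rfl

lemma Zreg_wf (m j : ℕ) : (Zreg m j).WellFormed typLab := by
  constructor
  · intro e _ v hv; simp [Zreg] at hv ⊢; exact hv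
  · intro e _; simp only [Zreg]; split <;> rfl

lemma Zreg_degree (m j w : ℕ) : (Zreg m j).degree w ≤ m := by
  unfold LHypergraph.degree
  calc ∑ e ∈ (Zreg m j).E, ((Zreg m j).att e).count w
      ≤ ∑ _e ∈ (Zreg m j).E, 1 := by
        apply Finset.sum_le_sum; intro e _
        simp [Zreg, List.count_cons]
        split <;> simp
    _ = m := by simp [Zreg]

lemma ZSet_BGdeg {k : ℕ} {Z0 : LHypergraph Lab} (h : Z0 ∈ (BGdeg k).ZSet) :
    ∃ m j, m ≤ k ∧ Z0 = Zreg m j := by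
  obtain ⟨i, hi⟩ := h
  refine ⟨(i : ℕ) % (k + 1), _, Nat.lt_succ_iff.mp (Nat.mod_lt _ (Nat.succ_pos k)), hi⟩

lemma union_wf {k : ℕ} {K : LHypergraph Lab} (hU : IsUnionOfCopies (BGdeg k).ZSet K) :
    K.WellFormed typLab ∧ ∀ v, K.degree v ≤ k := by
  obtain ⟨n, cV, cE, hcV, hcE, hattV, hcomp, hiso⟩ := hU
  -- per-edge data from the isomorphisms
  have hedge : ∀ e ∈ K.E, (K.att e).length = typLab (K.lab e) := by
    intro e he
    obtain ⟨Z0, hZ0, f, g, hfV, hgE, hfg⟩ := hiso (cE e) (hcE e he)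
    obtain ⟨m, j, hm, rfl⟩ := ZSet_BGdeg hZ0
    have heC : e ∈ (⟨K.V.filter (fun v => cV v = cE e), K.E.filter (fun e' => cE e' = cE e),
        K.att, K.lab⟩ : LHypergraph Lab).E := by simp [he]
    obtain ⟨hatt, hlab⟩ := hfg e heC
    have hge : g e ∈ (Zreg m j).E := hgE.1 heC
    have := (Zreg_wf m j).2 (g e) hge
    rw [hatt, hlab] at this
    simpa using this
  constructor
  · exact ⟨hattV, hedge⟩
  · intro v
    by_cases hv : v ∈ K.V
    · -- restrict the sum to the component of v
      have hres : K.degree v = ∑ e ∈ K.E.filter (fun e => cE e = cV v), (K.att e).count v := by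
        unfold LHypergraph.degree
        rw [Finset.sum_filter_of_ne]
        intro e he hne
        have hvmem : v ∈ K.att e := by
          by_contra hc
          exact hne (List.count_eq_zero.mpr hc)
        exact (hcomp e he v hvmem).symm
      obtain ⟨Z0, hZ0, f, g, hfV, hgE, hfg⟩ := hiso (cV v) (hcV v hv)
      obtain ⟨m, j, hm, rfl⟩ := ZSet_BGdeg hZ0
      set C : LHypergraph Lab := ⟨K.V.filter (fun w => cV w = cV v),
        K.E.filter (fun e => cE e = cV v), K.att, K.lab⟩ with hC
      have hvC : v ∈ C.V := by simp [hC, hv]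
      have hsum : ∑ e ∈ K.E.filter (fun e => cE e = cV v), (K.att e).count v
          = ∑ e' ∈ (Zreg m j).E, ((Zreg m j).att e').count (f v) := by
        apply Finset.sum_nbij g
        · intro a ha; exact hgE.1 ha
        · exact hgE.2.1
        · exact hgE.2.2
        · intro e he
          obtain ⟨hatt, _⟩ := hfg e he
          rw [hatt]
          refine (count_map_injOn hfV.2.1 (by exact_mod_cast hvC) _ ?_).symm
          intro x hx
          have hxE : e ∈ K.E ∧ cE e = cV v := Finset.mem_filter.mp he
          have hxV : x ∈ K.V := hattV e hxE.1 x hx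
          have : cV x = cE e := hcomp e hxE.1 x hx
          simp only [hC, Finset.coe_filter, Set.mem_setOf_eq]
          exact ⟨hxV, this.trans hxE.2⟩
      calc K.degree v = _ := hres
        _ = _ := hsum
        _ ≤ m := Zreg_degree m j (f v)
        _ ≤ k := hm
    · -- v not a vertex: degree 0
      unfold LHypergraph.degree
      have : ∀ e ∈ K.E, (K.att e).count v = 0 := by
        intro e he
        apply List.count_eq_zero.mpr
        intro hc
        exact hv (hattV e he v hc)
      rw [Finset.sum_congr rfl this]
      simp

/-! ### Backward direction: splitting each edge into two half-edges -/

def bM (H : LHypergraph Lab) : ℕ := H.E.sup id + 1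
def halfO (H : LHypergraph Lab) (e : ℕ) : ℕ := 2 * (e + bM H)
def halfI (H : LHypergraph Lab) (e : ℕ) : ℕ := 2 * (e + bM H) + 1

def attAll (H : LHypergraph Lab) (h : ℕ) : List ℕ :=
  if 2 * bM H ≤ h then
    (if h % 2 = 0 then (H.att (h / 2 - bM H)).take 1 else (H.att (h / 2 - bM H)).drop 1)
  else H.att h

def labAll (H : LHypergraph Lab) (h : ℕ) : Lab :=
  if 2 * bM H ≤ h then (if h % 2 = 0 then Lab.O else Lab.I) else H.lab h

def Gs (H : LHypergraph Lab) (S : Finset ℕ) : LHypergraph Lab :=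
  ⟨H.V, ((H.E \ S) ∪ S.image (halfO H)) ∪ S.image (halfI H), attAll H, labAll H⟩

lemma mem_lt_bM {H : LHypergraph Lab} {e : ℕ} (he : e ∈ H.E) : e < bM H :=
  Nat.lt_succ_of_le (Finset.le_sup (f := id) he)

lemma attAll_mem {H : LHypergraph Lab} {e : ℕ} (he : e ∈ H.E) : attAll H e = H.att e := by
  have := mem_lt_bM he
  unfold attAll; rw [if_neg (by omega)]

lemma labAll_mem {H : LHypergraph Lab} {e : ℕ} (he : e ∈ H.E) : labAll H e = H.lab e := by
  have := mem_lt_bM he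
  unfold labAll; rw [if_neg (by omega)]

lemma attAll_halfO (H : LHypergraph Lab) (e : ℕ) :
    attAll H (halfO H e) = (H.att e).take 1 := by
  unfold attAll halfO
  rw [if_pos (by omega)]
  have h1 : 2 * (e + bM H) % 2 = 0 := by omega
  have h2 : 2 * (e + bM H) / 2 = e + bM H := by omega
  rw [if_pos h1, h2, Nat.add_sub_cancel]

lemma attAll_halfI (H : LHypergraph Lab) (e : ℕ) :
    attAll H (halfI H e) = (H.att e).drop 1 := by
  unfold attAll halfI
  rw [if_pos (by omega)]
  have h1 : (2 * (e + bM H) + 1) % 2 ≠ 0 := by omega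
  have h2 : (2 * (e + bM H) + 1) / 2 = e + bM H := by omega
  rw [if_neg h1, h2, Nat.add_sub_cancel]

lemma labAll_halfO (H : LHypergraph Lab) (e : ℕ) : labAll H (halfO H e) = Lab.O := by
  unfold labAll halfO
  rw [if_pos (by omega), if_pos (by omega)]

lemma labAll_halfI (H : LHypergraph Lab) (e : ℕ) : labAll H (halfI H e) = Lab.I := by
  unfold labAll halfI
  rw [if_pos (by omega), if_neg (by omega)]

lemma Gs_E_erase {H : LHypergraph Lab} {S : Finset ℕ} {e : ℕ} (hS : S ⊆ H.E) (he : e ∈ S) :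
    (Gs H (S.erase e)).E = ((Gs H S).E \ {halfO H e, halfI H e}) ∪ {e} := by
  have heE : e ∈ H.E := hS he
  have heM : e < bM H := mem_lt_bM heE
  ext x
  simp only [Gs, Finset.mem_union, Finset.mem_sdiff, Finset.mem_image, Finset.mem_erase,
    Finset.mem_insert, Finset.mem_singleton, halfO, halfI]
  constructor
  · rintro ((⟨hxE, hxS⟩ | ⟨a, ⟨hae, haS⟩, rfl⟩) | ⟨a, ⟨hae, haS⟩, rfl⟩)
    · by_cases hxe : x = e
      · exact Or.inr hxe
      · have hxM : x < bM H := mem_lt_bM hxE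
        refine Or.inl ⟨Or.inl (Or.inl ⟨hxE, fun hxS' => hxS ⟨hxe, hxS'⟩⟩), by omega⟩
    · have : a < bM H := mem_lt_bM (hS haS)
      have : e < bM H := heM
      refine Or.inl ⟨Or.inl (Or.inr ⟨a, haS, rfl⟩), by omega⟩
    · refine Or.inl ⟨Or.inr ⟨a, haS, rfl⟩, by omega⟩
  · rintro (⟨(⟨hxE, hxS⟩ | ⟨a, haS, rfl⟩) | ⟨a, haS, rfl⟩, hx12⟩ | rfl)
    · exact Or.inl (Or.inl ⟨hxE, fun h => hxS h.2⟩)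
    · refine Or.inl (Or.inr ⟨a, ⟨fun hae => ?_, haS⟩, rfl⟩)
      subst hae; omega
    · refine Or.inr ⟨a, ⟨fun hae => ?_, haS⟩, rfl⟩
      subst hae; omega
    · exact Or.inl (Or.inl ⟨heE, fun h => h.1 rfl⟩)

lemma step_core {H : LHypergraph Lab} (hlab : ∀ e ∈ H.E, H.lab e = Lab.b)
    {S : Finset ℕ} {e : ℕ} (hS : S ⊆ H.E) (he : e ∈ S) (K' : LHypergraph Lab)
    (hV' : K'.V = H.V)
    (hE' : K'.E = (Gs H (S.erase e)).E)
    (hatt' : ∀ x ∈ (Gs H (S.erase e)).E, K'.att x = attAll H x ∧ K'.lab x = labAll H x) :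
    BondingStep bondLab (Gs H S) K' := by
  have heE : e ∈ H.E := hS he
  have heM : e < bM H := mem_lt_bM heE
  have heG : e ∈ (Gs H (S.erase e)).E := by
    simp only [Gs, Finset.mem_union, Finset.mem_sdiff, Finset.mem_erase]
    exact Or.inl (Or.inl ⟨heE, fun h => h.1 rfl⟩)
  refine ⟨halfO H e, halfI H e, e, Lab.b, ?_, ?_, ?_, ?_, ?_, hV', ?_, ?_, ?_, ?_⟩
  · exact Finset.mem_union_left _ (Finset.mem_union_right _ (Finset.mem_image_of_mem _ he))
  · exact Finset.mem_union_right _ (Finset.mem_image_of_mem _ he)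
  · unfold halfO halfI; omega
  · -- e is fresh in Gs H S
    simp only [Gs, Finset.mem_union, Finset.mem_sdiff, Finset.mem_image, halfO, halfI]
    rintro ((⟨_, hxS⟩ | ⟨a, haS, ha⟩) | ⟨a, haS, ha⟩)
    · exact hxS he
    · have := mem_lt_bM (hS haS); omega
    · have := mem_lt_bM (hS haS); omega
  · show bondLab (labAll H (halfO H e)) (labAll H (halfI H e)) = some Lab.b
    rw [labAll_halfO, labAll_halfI]; rfl
  · rw [hE']; exact Gs_E_erase hS he
  · intro x hx
    have hx' : x ∈ (Gs H (S.erase e)).E := by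
      rw [Gs_E_erase hS he]; exact Finset.mem_union_left _ hx
    exact hatt' x hx'
  · show K'.att e = attAll H (halfO H e) ++ attAll H (halfI H e)
    rw [(hatt' e heG).1, attAll_halfO, attAll_halfI, attAll_mem heE, List.take_append_drop]
  · show K'.lab e = Lab.b
    rw [(hatt' e heG).2, labAll_mem heE, hlab e heE]

lemma derive {H : LHypergraph Lab} (hlab : ∀ e ∈ H.E, H.lab e = Lab.b) :
    ∀ S : Finset ℕ, S ⊆ H.E → S.Nonempty →
      Relation.ReflTransGen (BondingStep bondLab) (Gs H S) H := by
  intro S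
  induction S using Finset.strongInductionOn with
  | _ S ih =>
    intro hS hne
    obtain ⟨e, he⟩ := hne
    by_cases hrest : S.erase e = ∅
    · refine Relation.ReflTransGen.single (step_core hlab hS he H rfl ?_ ?_)
      · rw [hrest]; simp [Gs]
      · rw [hrest]
        intro x hx
        have hxE : x ∈ H.E := by simpa [Gs] using hx
        exact ⟨(attAll_mem hxE).symm, (labAll_mem hxE).symm⟩
    · refine Relation.ReflTransGen.head
        (step_core hlab hS he (Gs H (S.erase e)) rfl rfl (fun x _ => ⟨rfl, rfl⟩)) ?_
      exact ih (S.erase e) (Finset.erase_ssubset he) ((Finset.erase_subset _ _).trans hS)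
        (Finset.nonempty_iff_ne_empty.mpr hrest)

lemma union_copies {k : ℕ} {K : LHypergraph Lab}
    (hatt1 : ∀ e ∈ K.E, ∃ v ∈ K.V, K.att e = [v])
    (hlabK : ∀ e ∈ K.E, K.lab e = Lab.I ∨ K.lab e = Lab.O)
    (hdegK : ∀ v ∈ K.V, K.degree v ≤ k) :
    IsUnionOfCopies (BGdeg k).ZSet K := by
  classical
  set L := K.V.sort (· ≤ ·) with hL
  have hmemL : ∀ v, v ∈ L ↔ v ∈ K.V := fun v => Finset.mem_sort _
  have hnd : L.Nodup := Finset.sort_nodup _ _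
  refine ⟨L.length, fun v => L.idxOf v, fun e => L.idxOf ((K.att e).headI), ?_, ?_, ?_, ?_, ?_⟩
  · intro v hv; exact List.idxOf_lt_length_iff.mpr ((hmemL v).mpr hv)
  · intro e he
    obtain ⟨v, hvV, hatt⟩ := hatt1 e he
    show List.idxOf ((K.att e).headI) L < L.length
    rw [hatt]
    exact List.idxOf_lt_length_iff.mpr ((hmemL v).mpr hvV)
  · intro e he v hv
    obtain ⟨u, huV, hatt⟩ := hatt1 e he
    rw [hatt] at hv
    simp only [List.mem_singleton] at hv
    subst hv; exact huV
  · intro e he v hv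
    obtain ⟨u, huV, hatt⟩ := hatt1 e he
    rw [hatt] at hv
    simp only [List.mem_singleton] at hv
    subst hv
    show List.idxOf v L = List.idxOf ((K.att e).headI) L
    rw [hatt]
    rfl
  · intro i hi
    set w := L.get ⟨i, hi⟩ with hw
    have hwL : w ∈ L := by rw [hw]; exact List.get_mem L ⟨i, hi⟩
    have hwV : w ∈ K.V := (hmemL w).mp hwL
    have hidx : ∀ v ∈ K.V, (L.idxOf v = i ↔ v = w) := by
      intro v hv
      constructor
      · intro hvi
        have h1 : L.idxOf v < L.length := List.idxOf_lt_length_iff.mpr ((hmemL v).mpr hv)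
        have := List.idxOf_get h1
        rw [show (⟨L.idxOf v, h1⟩ : Fin L.length) = ⟨i, hi⟩ from Fin.ext hvi] at this
        exact this.symm
      · rintro rfl
        have h1 : L.idxOf w < L.length := List.idxOf_lt_length_iff.mpr hwL
        have h2 : L.get ⟨L.idxOf w, h1⟩ = L.get ⟨i, hi⟩ := List.idxOf_get h1
        have := (hnd.get_inj_iff.mp h2)
        exact congrArg Fin.val this
    have hVf : K.V.filter (fun v => L.idxOf v = i) = {w} := by
      ext v
      simp only [Finset.mem_filter, Finset.mem_singleton]
      constructor
      · rintro ⟨hv, hvi⟩; exact (hidx v hv).mp hvi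
      · rintro rfl; exact ⟨hwV, (hidx w hwV).mpr rfl⟩
    set Ei := K.E.filter (fun e => L.idxOf ((K.att e).headI) = i) with hEi
    have hEichar : ∀ e, e ∈ Ei ↔ e ∈ K.E ∧ K.att e = [w] := by
      intro e
      simp only [hEi, Finset.mem_filter]
      constructor
      · rintro ⟨he, hei⟩
        obtain ⟨v, hvV, hatt⟩ := hatt1 e he
        rw [hatt] at hei
        simp only [List.headI] at hei
        exact ⟨he, by rw [hatt, (hidx v hvV).mp hei]⟩
      · rintro ⟨he, hatt⟩
        refine ⟨he, ?_⟩
        rw [hatt]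
        exact (hidx w hwV).mpr rfl
    set Iset := Ei.filter (fun e => K.lab e = Lab.I) with hIs
    set Oset := Ei.filter (fun e => ¬ K.lab e = Lab.I) with hOs
    set m := Ei.card with hm
    set j := Iset.card with hj
    have hjm : j + Oset.card = m := Finset.card_filter_add_card_filter_not _
    have hjm' : j ≤ m := by omega
    -- m ≤ k via the degree of w
    have hmk : m ≤ k := by
      have h1 : ∑ e ∈ Ei, (K.att e).count w = m := by
        rw [Finset.sum_congr rfl (fun e he => ?_), Finset.sum_const, smul_eq_mul, mul_one]
        rw [((hEichar e).mp he).2]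
        simp
      calc m = ∑ e ∈ Ei, (K.att e).count w := h1.symm
        _ ≤ ∑ e ∈ K.E, (K.att e).count w :=
            Finset.sum_le_sum_of_subset (Finset.filter_subset _ _)
        _ = K.degree w := rfl
        _ ≤ k := hdegK w hwV
    -- the index into the start tuple
    refine ⟨Zreg m j, ⟨⟨j * (k + 1) + m, ?_⟩, ?_⟩, ?_⟩
    · show j * (k + 1) + m < (k + 1) * (k + 1)
      have : j ≤ k := hjm'.trans hmk
      nlinarith
    · show Zreg m j = Zreg _ _
      have h1 : (j * (k + 1) + m) % (k + 1) = m := by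
        rw [Nat.add_comm, Nat.add_mul_mod_self_right]
        exact Nat.mod_eq_of_lt (by omega)
      have h2 : (j * (k + 1) + m) / (k + 1) = j := by
        rw [Nat.add_comm, Nat.add_mul_div_right _ _ (by omega : 0 < k + 1)]
        rw [Nat.div_eq_of_lt (by omega), Nat.zero_add]
      simp only [BGdeg]
      rw [h1, h2, min_eq_left hjm']
    · -- the isomorphism
      have hdisjIO : ∀ e ∈ Oset, e ∉ Iset := by
        intro e heO heI
        exact (Finset.mem_filter.mp heO).2 (Finset.mem_filter.mp heI).2
      have hsplit : ∀ e ∈ Ei, e ∈ Iset ∨ e ∈ Oset := by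
        intro e he
        by_cases h : K.lab e = Lab.I
        · exact Or.inl (Finset.mem_filter.mpr ⟨he, h⟩)
        · exact Or.inr (Finset.mem_filter.mpr ⟨he, h⟩)
      set g : ℕ → ℕ := fun e =>
        if he : e ∈ Iset then ((Iset.equivFin ⟨e, he⟩ : Fin Iset.card) : ℕ)
        else if he2 : e ∈ Oset then j + ((Oset.equivFin ⟨e, he2⟩ : Fin Oset.card) : ℕ)
        else 0 with hg
      have hgI : ∀ e (he : e ∈ Iset), g e = ((Iset.equivFin ⟨e, he⟩ : Fin Iset.card) : ℕ) := by
        intro e he; rw [hg]; simp only; rw [dif_pos he]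
      have hgO : ∀ e (he : e ∈ Oset),
          g e = j + ((Oset.equivFin ⟨e, he⟩ : Fin Oset.card) : ℕ) := by
        intro e he; rw [hg]; simp only; rw [dif_neg (hdisjIO e he), dif_pos he]
      have hIlt : ∀ e (he : e ∈ Iset), g e < j := by
        intro e he; rw [hgI e he]; exact (Iset.equivFin ⟨e, he⟩).isLt
      have hOlt : ∀ e (he : e ∈ Oset), j ≤ g e ∧ g e < m := by
        intro e he; rw [hgO e he]
        have := (Oset.equivFin ⟨e, he⟩).isLt
        omega
      refine ⟨fun _ => 0, g, ?_, ?_, ?_⟩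
      · refine ⟨fun x hx => ?_, fun x hx y hy _ => ?_, fun x hx => ?_⟩
        · show (0 : ℕ) ∈ ↑({0} : Finset ℕ)
          simp
        · have hx' : x ∈ K.V.filter (fun v => List.idxOf v L = i) := hx
          have hy' : y ∈ K.V.filter (fun v => List.idxOf v L = i) := hy
          rw [hVf] at hx' hy'
          simp only [Finset.mem_singleton] at hx' hy'
          rw [hx', hy']
        · have hx' : x ∈ ({0} : Finset ℕ) := hx
          simp only [Finset.mem_singleton] at hx'
          refine ⟨w, ?_, hx'.symm⟩
          show w ∈ (K.V.filter (fun v => List.idxOf v L = i) : Finset ℕ)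
          rw [hVf]
          simp
      · show Set.BijOn g ↑Ei ↑(Finset.range m)
        refine ⟨?_, ?_, ?_⟩
        · intro e he
          simp only [Finset.mem_coe] at he ⊢
          rw [Finset.mem_range]
          rcases hsplit e he with h | h
          · exact (hIlt e h).trans_le hjm'
          · exact (hOlt e h).2
        · intro a ha b hb hab
          simp only [Finset.mem_coe] at ha hb
          rcases hsplit a ha with hA | hA <;> rcases hsplit b hb with hB | hB
          · rw [hgI a hA, hgI b hB] at hab
            have : (⟨a, hA⟩ : {x // x ∈ Iset}) = ⟨b, hB⟩ :=
              Iset.equivFin.injective (Fin.ext hab)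
            exact congrArg Subtype.val this
          · have h1 := hIlt a hA; have h2 := (hOlt b hB).1; omega
          · have h1 := hIlt b hB; have h2 := (hOlt a hA).1; omega
          · rw [hgO a hA, hgO b hB] at hab
            have hval : ((Oset.equivFin ⟨a, hA⟩ : Fin Oset.card) : ℕ)
                = ((Oset.equivFin ⟨b, hB⟩ : Fin Oset.card) : ℕ) := by omega
            have : (⟨a, hA⟩ : {x // x ∈ Oset}) = ⟨b, hB⟩ :=
              Oset.equivFin.injective (Fin.ext hval)
            exact congrArg Subtype.val this
        · intro x hx
          simp only [Finset.mem_coe, Finset.mem_range] at hx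
          by_cases hxj : x < j
          · set y := Iset.equivFin.symm ⟨x, hxj⟩ with hy
            refine ⟨(y : ℕ), ?_, ?_⟩
            · exact Finset.mem_coe.mpr (Finset.filter_subset _ _ y.2)
            · rw [hgI _ y.2]
              have : (⟨(y : ℕ), y.2⟩ : {x // x ∈ Iset}) = y := rfl
              rw [this, hy, Equiv.apply_symm_apply]
          · have hxo : x - j < Oset.card := by omega
            set y := Oset.equivFin.symm ⟨x - j, hxo⟩ with hy
            refine ⟨(y : ℕ), ?_, ?_⟩
            · exact Finset.mem_coe.mpr (Finset.filter_subset _ _ y.2)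
            · rw [hgO _ y.2]
              have : (⟨(y : ℕ), y.2⟩ : {x // x ∈ Oset}) = y := rfl
              rw [this, hy, Equiv.apply_symm_apply]
              show j + (x - j) = x
              omega
      · intro e he
        have heEi : e ∈ Ei := he
        constructor
        · show (fun _ => [0]) (g e) = (K.att e).map (fun _ => 0)
          rw [((hEichar e).mp heEi).2]
          rfl
        · show (if g e < j then Lab.I else Lab.O) = K.lab e
          rcases hsplit e heEi with hI | hO
          · rw [if_pos (hIlt e hI)]
            exact ((Finset.mem_filter.mp hI).2).symm
          · rw [if_neg (by have := (hOlt e hO).1; omega)]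
            rcases hlabK e ((hEichar e).mp heEi).1 with h | h
            · exact absurd h (Finset.mem_filter.mp hO).2
            · exact h.symm

lemma Gs_E_full (H : LHypergraph Lab) :
    (Gs H H.E).E = H.E.image (halfO H) ∪ H.E.image (halfI H) := by
  simp [Gs]

lemma Gs_img_disjoint (H : LHypergraph Lab) :
    Disjoint (H.E.image (halfO H)) (H.E.image (halfI H)) := by
  rw [Finset.disjoint_left]
  intro x hxO hxI
  simp only [Finset.mem_image, halfO, halfI] at hxO hxI
  obtain ⟨a, _, ha⟩ := hxO
  obtain ⟨b, _, hb⟩ := hxI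
  omega

lemma Gs_degree (H : LHypergraph Lab) (v : ℕ) : (Gs H H.E).degree v = H.degree v := by
  show ∑ e ∈ (Gs H H.E).E, (attAll H e).count v = ∑ e ∈ H.E, (H.att e).count v
  have hinjO : Set.InjOn (halfO H) ↑H.E := by
    intro a _ b _ hab; unfold halfO at hab; omega
  have hinjI : Set.InjOn (halfI H) ↑H.E := by
    intro a _ b _ hab; unfold halfI at hab; omega
  rw [Gs_E_full, Finset.sum_union (Gs_img_disjoint H), Finset.sum_image hinjO,
    Finset.sum_image hinjI, ← Finset.sum_add_distrib]
  apply Finset.sum_congr rfl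
  intro e _
  rw [attAll_halfO, attAll_halfI, ← List.count_append, List.take_append_drop]

lemma rtg_inv {k : ℕ} {A B : LHypergraph Lab}
    (h : Relation.ReflTransGen (BondingStep bondLab) A B)
    (hA : A.WellFormed typLab ∧ ∀ v, A.degree v ≤ k) :
    B.WellFormed typLab ∧ ∀ v, B.degree v ≤ k := by
  induction h with
  | refl => exact hA
  | tail _ hbc ih =>
    exact ⟨step_wf hbc ih.1, fun v => by rw [step_degree hbc v]; exact ih.2 v⟩

/-- the grammar `BGdeg k` generates exactly the connected
directed graphs of maximum degree at most `k`. -/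
theorem BGdeg_generates_bounded_degree (k : ℕ) (H : LHypergraph Lab) :
    (H ∈ BondingGrammar.Lang (BGdeg k) ∧ H.Connected) ↔
    (H.WellFormed typLab ∧ (∀ e ∈ H.E, H.lab e = Lab.b) ∧ H.Connected ∧
      ∀ v ∈ H.V, H.degree v ≤ k) := by
  constructor
  · rintro ⟨⟨⟨H₀, hU, hderiv⟩, hT⟩, hconn⟩
    have hinv := rtg_inv hderiv (union_wf hU)
    refine ⟨hinv.1, fun e he => ?_, hconn, fun v _ => hinv.2 v⟩
    simpa [BGdeg] using hT e he
  · rintro ⟨hwf, hlab, hconn, hdeg⟩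
    refine ⟨⟨?_, fun e he => by rw [hlab e he]; rfl⟩, hconn⟩
    by_cases hE : H.E = ∅
    · refine ⟨H, union_copies (fun e he => absurd he (by rw [hE]; simp)) 
        (fun e he => absurd he (by rw [hE]; simp)) (fun v hv => hdeg v hv),
        Relation.ReflTransGen.refl⟩
    · refine ⟨Gs H H.E, union_copies ?_ ?_ ?_, ?_⟩
      · intro e he
        rw [Gs_E_full] at he
        rcases Finset.mem_union.mp he with h | h <;>
          · simp only [Finset.mem_image] at h
            obtain ⟨a, ha, rfl⟩ := h
            have hlen : (H.att a).length = 2 := by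
              rw [hwf.2 a ha, hlab a ha]; rfl
            obtain ⟨u, w, huw⟩ := List.length_eq_two.mp hlen
            first
            | exact ⟨u, hwf.1 a ha u (by rw [huw]; simp), by
                show attAll H (halfO H a) = [u]
                rw [attAll_halfO, huw]; rfl⟩
            | exact ⟨w, hwf.1 a ha w (by rw [huw]; simp), by
                show attAll H (halfI H a) = [w]
                rw [attAll_halfI, huw]; rfl⟩
      · intro e he
        rw [Gs_E_full] at he
        rcases Finset.mem_union.mp he with h | h <;> simp only [Finset.mem_image] at h <;>
          obtain ⟨a, ha, rfl⟩ := h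
        · right; exact labAll_halfO H a
        · left; exact labAll_halfI H a
      · intro v hv
        rw [Gs_degree]
        exact hdeg v hv
      · exact derive hlab H.E (Finset.Subset.refl _) (Finset.nonempty_iff_ne_empty.mpr hE)
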